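/- Positivity of the strict-completeness constant: Let E_1, …, E_N be d×d complex matrices with measurement map M(X) = (Tr(E_1 X), …, Tr(E_N X)), and suppose the family is rank-r strictly-complete, i.e. for every PSD X₁ with rank(X₁) ≤ r and every PSD X₂, M(X₁) = M(X₂) implies X₁ = X₂. Then there exists a constant α > 0 such that α‖X₁ − X₂‖₂ ≤ ‖M(X₁) − M(X₂)‖₂ for every PSD X₁ with rank(X₁) ≤ r and every PSD X₂. -/

import Mathlib

open Matrix
open scoped ComplexOrder

/-- The measurement map of a family of operators: `X ↦ (Tr(E₁ X), …, Tr(E_N X))`. -/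
noncomputable def measMap {d N : ℕ} (E : Fin N → Matrix (Fin d) (Fin d) ℂ)
    (X : Matrix (Fin d) (Fin d) ℂ) : Fin N → ℂ :=
  fun μ => (E μ * X).trace

/-- The ℓ₂-norm of a vector in ℂ^N : `‖v‖₂ = √(Σ_μ |v_μ|²)`. -/
noncomputable def vnorm {N : ℕ} (v : Fin N → ℂ) : ℝ :=
  Real.sqrt (∑ μ, ‖v μ‖ ^ 2)

/-- The Frobenius (Hilbert–Schmidt) norm of a matrix: `‖X‖₂ = √Tr(X†X)`. -/
noncomputable def fnorm {d : ℕ} (X : Matrix (Fin d) (Fin d) ℂ) : ℝ :=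
  Real.sqrt ((Xᴴ * X).trace.re)


lemma fnorm_eq {d : ℕ} (X : Matrix (Fin d) (Fin d) ℂ) :
    fnorm X = Real.sqrt (∑ j, ∑ i, ‖X i j‖ ^ 2) := by
  unfold fnorm
  congr 1
  rw [Matrix.trace, Complex.re_sum]
  refine Finset.sum_congr rfl fun j _ => ?_
  rw [Matrix.diag, Matrix.mul_apply, Complex.re_sum]
  refine Finset.sum_congr rfl fun i _ => ?_
  simp [Matrix.conjTranspose_apply, Complex.conj_mul', ← Complex.normSq_eq_norm_sq, ← Complex.ofReal_pow, Complex.ofReal_re]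


lemma vnorm_nonneg {N : ℕ} (v : Fin N → ℂ) : 0 ≤ vnorm v := Real.sqrt_nonneg _

lemma vnorm_zero {N : ℕ} : vnorm (0 : Fin N → ℂ) = 0 := by simp [vnorm]

lemma vnorm_eq_zero {N : ℕ} {v : Fin N → ℂ} (h : vnorm v = 0) : v = 0 := by
  unfold vnorm at h
  have h0 : (∑ μ, ‖v μ‖ ^ 2) = 0 := le_antisymm (Real.sqrt_eq_zero'.mp h) (Finset.sum_nonneg fun i _ => sq_nonneg _)
  have := (Finset.sum_eq_zero_iff_of_nonneg (fun i _ => sq_nonneg _)).mp h0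
  funext μ
  simpa using this μ (Finset.mem_univ μ)

lemma vnorm_smul {N : ℕ} {c : ℝ} (hc : 0 ≤ c) (v : Fin N → ℂ) :
    vnorm ((c : ℂ) • v) = c * vnorm v := by
  unfold vnorm
  rw [← Real.sqrt_sq hc, ← Real.sqrt_mul (by positivity), Finset.mul_sum]
  congr 1
  refine Finset.sum_congr rfl fun μ _ => ?_
  simp [norm_smul, mul_pow, Real.sq_sqrt (sq_nonneg c)]

lemma measMap_sub {d N : ℕ} (E : Fin N → Matrix (Fin d) (Fin d) ℂ) (X Y : Matrix (Fin d) (Fin d) ℂ) :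
    measMap E (X - Y) = measMap E X - measMap E Y := by
  funext μ; simp [measMap, Matrix.mul_sub]

lemma measMap_smul {d N : ℕ} (E : Fin N → Matrix (Fin d) (Fin d) ℂ) (c : ℂ) (X : Matrix (Fin d) (Fin d) ℂ) :
    measMap E (c • X) = c • measMap E X := by
  funext μ; simp [measMap, Matrix.mul_smul]

lemma fnorm_nonneg {d : ℕ} (X : Matrix (Fin d) (Fin d) ℂ) : 0 ≤ fnorm X := Real.sqrt_nonneg _

lemma fnorm_zero {d : ℕ} : fnorm (0 : Matrix (Fin d) (Fin d) ℂ) = 0 := by simp [fnorm_eq]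

lemma fnorm_pos {d : ℕ} {X : Matrix (Fin d) (Fin d) ℂ} (h : X ≠ 0) : 0 < fnorm X := by
  rw [fnorm_eq]
  apply Real.sqrt_pos.mpr
  obtain ⟨i, j, hij⟩ : ∃ i j, X i j ≠ 0 := by
    by_contra hc
    push_neg at hc
    exact h (by ext i j; simpa using hc i j)
  have h1 : (0:ℝ) < ∑ i, ‖X i j‖ ^ 2 :=
    Finset.sum_pos' (fun k _ => sq_nonneg _)
      ⟨i, Finset.mem_univ i, by have := norm_pos_iff.mpr hij; positivity⟩
  exact Finset.sum_pos' (fun k _ => Finset.sum_nonneg fun l _ => sq_nonneg _)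
    ⟨j, Finset.mem_univ j, h1⟩

lemma fnorm_smul {d : ℕ} {c : ℝ} (hc : 0 ≤ c) (X : Matrix (Fin d) (Fin d) ℂ) :
    fnorm ((c : ℂ) • X) = c * fnorm X := by
  rw [fnorm_eq, fnorm_eq, ← Real.sqrt_sq hc, ← Real.sqrt_mul (by positivity), Finset.mul_sum]
  congr 1
  refine Finset.sum_congr rfl fun j _ => ?_
  rw [Finset.mul_sum]
  refine Finset.sum_congr rfl fun i _ => ?_
  simp [norm_smul, mul_pow, Real.sq_sqrt (sq_nonneg c)]

-- unitary conjugation invariance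
lemma fnorm_unitary_conj {d : ℕ} {U : Matrix (Fin d) (Fin d) ℂ} (hU : Uᴴ * U = 1)
    (M : Matrix (Fin d) (Fin d) ℂ) : fnorm (U * M * Uᴴ) = fnorm M := by
  unfold fnorm
  congr 2
  have h1 : (U * M * Uᴴ)ᴴ * (U * M * Uᴴ) = U * (Mᴴ * M) * Uᴴ := by
    calc (U * M * Uᴴ)ᴴ * (U * M * Uᴴ) = U * (Mᴴ * ((Uᴴ * U) * (M * Uᴴ))) := by
          simp only [Matrix.conjTranspose_mul, Matrix.conjTranspose_conjTranspose, Matrix.mul_assoc]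
      _ = U * (Mᴴ * M) * Uᴴ := by rw [hU]; simp only [Matrix.one_mul, Matrix.mul_assoc]
  rw [h1, Matrix.trace_mul_cycle, ← Matrix.mul_assoc, hU, Matrix.one_mul]

lemma fnorm_diag {d : ℕ} (f : Fin d → ℝ) :
    fnorm (Matrix.diagonal (fun i => (f i : ℂ))) = Real.sqrt (∑ i, f i ^ 2) := by
  rw [fnorm_eq]
  congr 1
  rw [Finset.sum_comm]
  refine Finset.sum_congr rfl fun i _ => ?_
  rw [Finset.sum_eq_single i (fun b _ hb => by simp [Matrix.diagonal_apply_ne' _ hb]) (by simp)]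
  simp [Matrix.diagonal_apply_eq]

noncomputable def padMap {d : ℕ} (p : Fin d → Prop) [DecidablePred p] :
    ({i // p i} → ℂ) →ₗ[ℂ] (Fin d → ℂ) where
  toFun c k := if h : p k then c ⟨k, h⟩ else 0
  map_add' c c' := by funext k; by_cases h : p k <;> simp [h]
  map_smul' m c := by funext k; by_cases h : p k <;> simp [h]

lemma card_pos_le_rank {d : ℕ} {X₁ X₂ : Matrix (Fin d) (Fin d) ℂ}
    (h1 : X₁.PosSemidef) (h2 : X₂.PosSemidef) (hΔ : (X₁ - X₂).IsHermitian) :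
    Fintype.card {i // 0 < hΔ.eigenvalues i} ≤ X₁.rank := by
  set lam := hΔ.eigenvalues with hlam
  set U : Matrix (Fin d) (Fin d) ℂ := (hΔ.eigenvectorUnitary : Matrix (Fin d) (Fin d) ℂ) with hUdef
  have hU : Uᴴ * U = 1 := by
    rw [← Matrix.star_eq_conjTranspose]
    exact Matrix.mem_unitaryGroup_iff'.mp hΔ.eigenvectorUnitary.2
  have hspec : X₁ - X₂ = U * Matrix.diagonal (fun i => (lam i : ℂ)) * Uᴴ := by
    simpa [Matrix.star_eq_conjTranspose, Function.comp_def] using hΔ.spectral_theorem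
  by_contra hgt
  push_neg at hgt
  set p : Fin d → Prop := fun i => 0 < lam i with hp
  set L : ({i // p i} → ℂ) →ₗ[ℂ] (Fin d → ℂ) :=
    (X₁.mulVecLin.comp U.mulVecLin).comp (padMap p) with hL
  -- L is not injective
  have hnotinj : ¬ Function.Injective L := by
    intro hinj
    have h3' : LinearMap.range L ≤ LinearMap.range X₁.mulVecLin := by
      rw [hL, LinearMap.comp_assoc]
      exact LinearMap.range_comp_le_range _ _
    have hchain : Fintype.card {i // p i} ≤ X₁.rank := by
      calc Fintype.card {i // p i} = Module.finrank ℂ ({i // p i} → ℂ) := by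
            simp [Module.finrank_pi]
        _ = Module.finrank ℂ (LinearMap.range L) := (LinearMap.finrank_range_of_inj hinj).symm
        _ ≤ Module.finrank ℂ (LinearMap.range X₁.mulVecLin) := Submodule.finrank_mono h3'
        _ = X₁.rank := rfl
    exact absurd hchain (not_le.mpr hgt)
  obtain ⟨a, b, hab, hne⟩ := Function.not_injective_iff.mp hnotinj
  set c := a - b with hc
  have hc0 : c ≠ 0 := sub_ne_zero.mpr hne
  have hLc : L c = 0 := by rw [hc, map_sub, hab, sub_self]
  set v : Fin d → ℂ := padMap p c with hv
  set x : Fin d → ℂ := U *ᵥ v with hx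
  have hX1x : X₁ *ᵥ x = 0 := by
    have := hLc
    simp only [hL, LinearMap.comp_apply, Matrix.mulVecLin_apply] at this
    rw [hx, hv]
    exact this
  -- the quadratic form of Δ at x, computed two ways
  have hquad : dotProduct (star x) ((X₁ - X₂) *ᵥ x) = ∑ k, (lam k : ℂ) * (Complex.normSq (v k) : ℂ) := by
    rw [hspec, hx]
    rw [Matrix.mulVec_mulVec]
    have : U * Matrix.diagonal (fun i => (lam i : ℂ)) * Uᴴ * U
        = U * Matrix.diagonal (fun i => (lam i : ℂ)) := by
      rw [Matrix.mul_assoc, hU, Matrix.mul_one]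
    rw [this, Matrix.star_mulVec, Matrix.dotProduct_mulVec, Matrix.vecMul_vecMul,
      ← Matrix.mul_assoc, hU, Matrix.one_mul]
    rw [dotProduct]
    refine Finset.sum_congr rfl fun k _ => ?_
    rw [Matrix.vecMul_diagonal]
    rw [Complex.normSq_eq_conj_mul_self]
    push_cast
    ring_nf
    simp [Matrix.star_apply]
    ring
  -- the rhs is positive
  obtain ⟨s, hs⟩ : ∃ s, c s ≠ 0 := Function.ne_iff.mp hc0
  have hvs : v s.1 = c s := by
    rw [hv]
    show (if h : p s.1 then c ⟨s.1, h⟩ else 0) = c s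
    rw [dif_pos s.2]
  have hpos : 0 < ∑ k, lam k * Complex.normSq (v k) := by
    apply Finset.sum_pos'
    · intro k _
      by_cases h : p k
      · exact mul_nonneg (le_of_lt h) (Complex.normSq_nonneg _)
      · have : v k = 0 := by rw [hv]; exact dif_neg h
        simp [this]
    · refine ⟨s.1, Finset.mem_univ _, ?_⟩
      have := s.2
      have hnz : Complex.normSq (v s.1) > 0 := by
        rw [hvs]; exact Complex.normSq_pos.mpr hs
      exact mul_pos this hnz
  -- but the quadratic form is ≤ 0
  have hneg : (dotProduct (star x) ((X₁ - X₂) *ᵥ x)).re ≤ 0 := by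
    rw [Matrix.sub_mulVec, dotProduct_sub, hX1x]
    have h2x := h2.dotProduct_mulVec_nonneg x
    rw [Complex.le_def] at h2x
    simp only [Complex.sub_re, Complex.zero_re] at h2x ⊢
    have : dotProduct (star x) (0 : Fin d → ℂ) = 0 := by simp
    rw [this]
    simp
    linarith [h2x.1]
  rw [hquad] at hneg
  have : (∑ k, (lam k : ℂ) * (Complex.normSq (v k) : ℂ)).re
      = ∑ k, lam k * Complex.normSq (v k) := by
    push_cast
    rw [Complex.re_sum]
    simp
  rw [this] at hneg
  linarith

lemma decomp {d r : ℕ} {X₁ X₂ : Matrix (Fin d) (Fin d) ℂ}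
    (h1 : X₁.PosSemidef) (hr : X₁.rank ≤ r) (h2 : X₂.PosSemidef) :
    ∃ (V : Matrix (Fin d) (Fin r) ℂ) (W : Matrix (Fin d) (Fin d) ℂ),
      X₁ - X₂ = V * Vᴴ - W * Wᴴ ∧ fnorm (V * Vᴴ) ≤ fnorm (X₁ - X₂) ∧
        fnorm (W * Wᴴ) ≤ fnorm (X₁ - X₂) := by
  have hΔ : (X₁ - X₂).IsHermitian := h1.1.sub h2.1
  set lam := hΔ.eigenvalues with hlam
  set U : Matrix (Fin d) (Fin d) ℂ := (hΔ.eigenvectorUnitary : Matrix (Fin d) (Fin d) ℂ) with hUdef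
  have hU : Uᴴ * U = 1 := by
    rw [← Matrix.star_eq_conjTranspose]
    exact Matrix.mem_unitaryGroup_iff'.mp hΔ.eigenvectorUnitary.2
  have hspec : X₁ - X₂ = U * Matrix.diagonal (fun i => (lam i : ℂ)) * Uᴴ := by
    simpa [Matrix.star_eq_conjTranspose, Function.comp_def] using hΔ.spectral_theorem
  -- the square-root factor matrices
  set A : Matrix (Fin d) (Fin d) ℂ :=
    U * Matrix.diagonal (fun i => (Real.sqrt (max (lam i) 0) : ℂ)) with hA
  set B : Matrix (Fin d) (Fin d) ℂ :=
    U * Matrix.diagonal (fun i => (Real.sqrt (max (-lam i) 0) : ℂ)) with hB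
  have hDsq : ∀ g : Fin d → ℝ, (∀ i, 0 ≤ g i) →
      Matrix.diagonal (fun i => (Real.sqrt (g i) : ℂ)) *
        (Matrix.diagonal (fun i => (Real.sqrt (g i) : ℂ)))ᴴ
      = Matrix.diagonal (fun i => ((g i : ℝ) : ℂ)) := by
    intro g hg
    rw [Matrix.diagonal_conjTranspose, Matrix.diagonal_mul_diagonal]
    ext i j
    by_cases h : i = j
    · subst h
      simp only [Matrix.diagonal_apply_eq, Pi.star_apply, Complex.star_def, Complex.conj_ofReal]
      rw [← Complex.ofReal_mul, Real.mul_self_sqrt (hg i)]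
    · simp [Matrix.diagonal_apply_ne _ h]
  have hAA : A * Aᴴ = U * Matrix.diagonal (fun i => ((max (lam i) 0 : ℝ) : ℂ)) * Uᴴ := by
    rw [hA, Matrix.conjTranspose_mul]
    simp only [Matrix.mul_assoc]
    rw [← Matrix.mul_assoc (Matrix.diagonal _), hDsq _ (fun i => le_max_right _ _)]
  have hBB : B * Bᴴ = U * Matrix.diagonal (fun i => ((max (-lam i) 0 : ℝ) : ℂ)) * Uᴴ := by
    rw [hB, Matrix.conjTranspose_mul]
    simp only [Matrix.mul_assoc]
    rw [← Matrix.mul_assoc (Matrix.diagonal _), hDsq _ (fun i => le_max_right _ _)]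
  have hPQ : A * Aᴴ - B * Bᴴ = X₁ - X₂ := by
    rw [hAA, hBB, hspec]
    rw [← Matrix.sub_mul, ← Matrix.mul_sub]
    have hdiag : Matrix.diagonal (fun i => ((max (lam i) 0 : ℝ) : ℂ))
        - Matrix.diagonal (fun i => ((max (-lam i) 0 : ℝ) : ℂ))
        = Matrix.diagonal (fun i => (lam i : ℂ)) := by
      ext i j
      by_cases h : i = j
      · subst h
        simp [Matrix.diagonal_apply_eq, ← Complex.ofReal_sub, max_zero_sub_max_neg_zero_eq_self]
      · simp [Matrix.diagonal_apply_ne _ h]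
    rw [hdiag]
  -- norm bounds
  have keynorm : ∀ f : Fin d → ℝ, (∀ i, f i ^ 2 ≤ lam i ^ 2) →
      fnorm (U * Matrix.diagonal (fun i => (f i : ℂ)) * Uᴴ) ≤ fnorm (X₁ - X₂) := by
    intro f hf
    rw [hspec, fnorm_unitary_conj hU, fnorm_unitary_conj hU, fnorm_diag, fnorm_diag]
    exact Real.sqrt_le_sqrt (Finset.sum_le_sum fun i _ => hf i)
  have hnormA : fnorm (A * Aᴴ) ≤ fnorm (X₁ - X₂) := by
    rw [hAA]
    apply keynorm
    intro i
    rcases le_total (lam i) 0 with h | h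
    · rw [max_eq_right h]; nlinarith [sq_nonneg (lam i)]
    · rw [max_eq_left h]
  have hnormB : fnorm (B * Bᴴ) ≤ fnorm (X₁ - X₂) := by
    rw [hBB]
    apply keynorm
    intro i
    rcases le_total (-lam i) 0 with h | h
    · rw [max_eq_right h]; nlinarith [sq_nonneg (lam i)]
    · rw [max_eq_left h]
      nlinarith [sq_nonneg (lam i)]
  -- A vanishes on non-positive columns
  have hA0 : ∀ i k, ¬ (0 < lam k) → A i k = 0 := by
    intro i k hk
    rw [hA, Matrix.mul_diagonal]
    have : max (lam k) 0 = 0 := max_eq_right (le_of_not_gt hk)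
    rw [this, Real.sqrt_zero, Complex.ofReal_zero, mul_zero]
  -- embed the positive indices into Fin r
  have hcard : Fintype.card {i // 0 < lam i} ≤ r := le_trans (card_pos_le_rank h1 h2 hΔ) hr
  have hemb : Nonempty ({i // 0 < lam i} ↪ Fin r) := by
    apply Function.Embedding.nonempty_of_card_le
    simpa using hcard
  obtain ⟨e⟩ := hemb
  set V : Matrix (Fin d) (Fin r) ℂ :=
    Matrix.of (fun i k => ∑ s : {i // 0 < lam i}, if e s = k then A i s.1 else 0) with hV
  have hVV : V * Vᴴ = A * Aᴴ := by
    ext i j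
    rw [Matrix.mul_apply, Matrix.mul_apply]
    have lhs : ∀ k : Fin r, V i k * Vᴴ k j
        = ∑ s : {i // 0 < lam i}, ∑ t : {i // 0 < lam i},
            (if e s = k then A i s.1 else 0) * (if e t = k then star (A j t.1) else 0) := by
      intro k
      rw [Matrix.conjTranspose_apply, hV]
      show (∑ s : {i // 0 < lam i}, if e s = k then A i s.1 else 0) *
          star (∑ t : {i // 0 < lam i}, if e t = k then A j t.1 else 0) = _
      rw [star_sum]
      rw [Finset.sum_mul_sum]
      refine Finset.sum_congr rfl fun s _ => Finset.sum_congr rfl fun t _ => ?_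
      rw [apply_ite star, star_zero]
    simp_rw [lhs]
    rw [Finset.sum_comm]
    have inner : ∀ s : {i // 0 < lam i},
        (∑ k : Fin r, ∑ t : {i // 0 < lam i},
          (if e s = k then A i s.1 else 0) * (if e t = k then star (A j t.1) else 0))
        = A i s.1 * star (A j s.1) := by
      intro s
      rw [Finset.sum_comm]
      have : ∀ t : {i // 0 < lam i}, (∑ k : Fin r,
          (if e s = k then A i s.1 else 0) * (if e t = k then star (A j t.1) else 0))
          = if t = s then A i s.1 * star (A j s.1) else 0 := by
        intro t
        rw [Finset.sum_eq_single (e s)]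
        · simp only [if_pos rfl]
          by_cases h : t = s
          · subst h; simp
          · have : ¬ (e t = e s) := fun hc => h (e.injective hc)
            rw [if_neg this, if_neg h, mul_zero]
        · intro b _ hb
          rw [if_neg (fun hc => hb hc.symm), zero_mul]
        · intro hb
          exact absurd (Finset.mem_univ _) hb
      simp_rw [this]
      simp
    simp_rw [inner]
    have hct : ∀ k, Aᴴ k j = star (A j k) := fun k => rfl
    simp_rw [hct]
    -- now: ∑ s : subtype, A i s * star (A j s) = ∑ k : Fin d, A i k * star (A j k)
    rw [← Finset.sum_subtype (Finset.univ.filter (fun k => 0 < lam k))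
      (fun k => by simp) (fun k => A i k * star (A j k))]
    refine Finset.sum_subset (Finset.filter_subset _ _) ?_
    intro k _ hk
    have hk' : ¬ (0 < lam k) := by simpa using hk
    rw [hA0 i k hk', zero_mul]
  refine ⟨V, B, ?_, ?_, hnormB⟩
  · rw [hVV, hPQ]
  · rw [hVV]; exact hnormA

lemma entry_bound {d r : ℕ} (M : Matrix (Fin d) (Fin r) ℂ) (h : fnorm (M * Mᴴ) ≤ 1)
    (i : Fin d) (k : Fin r) : ‖M i k‖ ≤ 1 := by
  have hdiag : ((M * Mᴴ) i i).re = ∑ k', ‖M i k'‖ ^ 2 := by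
    rw [Matrix.mul_apply, Complex.re_sum]
    refine Finset.sum_congr rfl fun k' _ => ?_
    rw [Matrix.conjTranspose_apply]
    rw [show star (M i k') = (starRingEnd ℂ) (M i k') from rfl, Complex.mul_conj]
    simp [Complex.normSq_eq_norm_sq, ← Complex.ofReal_pow]
  have h2 : ((M * Mᴴ) i i).re ≤ fnorm (M * Mᴴ) := by
    rw [fnorm_eq]
    refine le_trans (Complex.re_le_norm _) ?_
    rw [← Real.sqrt_sq (norm_nonneg _)]
    apply Real.sqrt_le_sqrt
    calc ‖(M * Mᴴ) i i‖ ^ 2 ≤ ∑ i', ‖(M * Mᴴ) i' i‖ ^ 2 :=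
          Finset.single_le_sum (f := fun i' => ‖(M * Mᴴ) i' i‖ ^ 2)
            (fun _ _ => sq_nonneg _) (Finset.mem_univ i)
      _ ≤ ∑ j', ∑ i', ‖(M * Mᴴ) i' j'‖ ^ 2 :=
          Finset.single_le_sum (f := fun j' => ∑ i', ‖(M * Mᴴ) i' j'‖ ^ 2)
            (fun _ _ => Finset.sum_nonneg fun _ _ => sq_nonneg _) (Finset.mem_univ i)
  have h3 : ‖M i k‖ ^ 2 ≤ ∑ k', ‖M i k'‖ ^ 2 :=
    Finset.single_le_sum (f := fun k' => ‖M i k'‖ ^ 2) (fun _ _ => sq_nonneg _)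
      (Finset.mem_univ k)
  nlinarith [norm_nonneg (M i k)]

-- continuity of fnorm
lemma fnorm_continuous {d : ℕ} : Continuous (fnorm (d := d)) := by
  have : (fnorm (d := d)) = fun X => Real.sqrt (∑ j, ∑ i, ‖X i j‖ ^ 2) :=
    funext fnorm_eq
  rw [this]
  apply Real.continuous_sqrt.comp
  apply continuous_finset_sum
  intro j _
  apply continuous_finset_sum
  intro i _
  exact ((continuous_apply j).comp (continuous_apply i)).norm.pow 2


lemma vnorm_continuous {N : ℕ} : Continuous (vnorm (N := N)) := by
  apply Real.continuous_sqrt.comp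
  apply continuous_finset_sum
  intro μ _
  exact (continuous_apply μ).norm.pow 2


lemma measMap_continuous {d N : ℕ} (E : Fin N → Matrix (Fin d) (Fin d) ℂ) :
    Continuous (measMap E) := by
  apply continuous_pi
  intro μ
  exact (Continuous.matrix_mul continuous_const continuous_id).matrix_trace

-- compactness of the entrywise ball
lemma compact_ball {d r : ℕ} :
    IsCompact {A : Matrix (Fin d) (Fin r) ℂ | ∀ i k, ‖A i k‖ ≤ 1} := by
  have h1 : {A : Matrix (Fin d) (Fin r) ℂ | ∀ i k, ‖A i k‖ ≤ 1}
      = Set.pi Set.univ (fun _ : Fin d => Set.pi Set.univ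
          (fun _ : Fin r => Metric.closedBall (0 : ℂ) 1)) := by
    ext A
    constructor
    · intro hA i _ k _
      simpa [Metric.mem_closedBall, dist_zero_right] using hA i k
    · intro hA i k
      simpa [Metric.mem_closedBall, dist_zero_right] using hA i (Set.mem_univ i) k (Set.mem_univ k)
  rw [h1]
  exact isCompact_univ_pi fun i => isCompact_univ_pi fun k => ProperSpace.isCompact_closedBall _ _

/-- **Positivity of the strict-completeness constant.** If a measurement family is rank-`r`
strictly-complete, then there is a strictly positive constant `α` with
`α‖X₁ − X₂‖₂ ≤ ‖M(X₁) − M(X₂)‖₂` for every PSD `X₁` of rank ≤ r and every PSD `X₂`. -/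
theorem strict_completeness_constant_pos {d N r : ℕ} (E : Fin N → Matrix (Fin d) (Fin d) ℂ)
    (hsc : ∀ X₁ X₂ : Matrix (Fin d) (Fin d) ℂ, X₁.PosSemidef → X₁.rank ≤ r →
      X₂.PosSemidef → measMap E X₁ = measMap E X₂ → X₁ = X₂) :
    ∃ α : ℝ, 0 < α ∧
      ∀ X₁ X₂ : Matrix (Fin d) (Fin d) ℂ, X₁.PosSemidef → X₁.rank ≤ r → X₂.PosSemidef →
        α * fnorm (X₁ - X₂) ≤ vnorm (measMap E X₁ - measMap E X₂) := by
  classical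
  set K : Set (Matrix (Fin d) (Fin r) ℂ × Matrix (Fin d) (Fin d) ℂ) :=
    {p | (∀ i k, ‖p.1 i k‖ ≤ 1) ∧ (∀ i j, ‖p.2 i j‖ ≤ 1) ∧
      fnorm (p.1 * p.1ᴴ - p.2 * p.2ᴴ) = 1} with hK
  have key : ∀ X₁ X₂ : Matrix (Fin d) (Fin d) ℂ, X₁.PosSemidef → X₁.rank ≤ r →
      X₂.PosSemidef → X₁ ≠ X₂ → ∃ p ∈ K,
        vnorm (measMap E X₁ - measMap E X₂)
          = fnorm (X₁ - X₂) * vnorm (measMap E (p.1 * p.1ᴴ - p.2 * p.2ᴴ)) := by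
    intro X₁ X₂ h1 hrk h2 hne
    obtain ⟨V, W, hVW, hnV, hnW⟩ := decomp h1 hrk h2
    have hΔ0 : X₁ - X₂ ≠ 0 := sub_ne_zero.mpr hne
    set t := fnorm (X₁ - X₂) with ht
    have htpos : 0 < t := fnorm_pos hΔ0
    have htinv : (0:ℝ) ≤ t⁻¹ := inv_nonneg.mpr htpos.le
    set s : ℝ := Real.sqrt t⁻¹ with hs
    have hss : (s : ℂ) * star (s : ℂ) = ((t⁻¹ : ℝ) : ℂ) := by
      rw [Complex.star_def, Complex.conj_ofReal, ← Complex.ofReal_mul,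
        Real.mul_self_sqrt htinv]
    set V' := ((s : ℂ)) • V with hV'
    set W' := ((s : ℂ)) • W with hW'
    have hVV' : V' * V'ᴴ = ((t⁻¹:ℝ):ℂ) • (V * Vᴴ) := by
      rw [hV', Matrix.conjTranspose_smul, Matrix.smul_mul, Matrix.mul_smul,
        smul_smul, hss]
    have hWW' : W' * W'ᴴ = ((t⁻¹:ℝ):ℂ) • (W * Wᴴ) := by
      rw [hW', Matrix.conjTranspose_smul, Matrix.smul_mul, Matrix.mul_smul,
        smul_smul, hss]
    have hdiff : V' * V'ᴴ - W' * W'ᴴ = ((t⁻¹:ℝ):ℂ) • (X₁ - X₂) := by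
      rw [hVV', hWW', ← smul_sub, ← hVW]
    have hbV : fnorm (V' * V'ᴴ) ≤ 1 := by
      rw [hVV', fnorm_smul htinv]
      calc t⁻¹ * fnorm (V * Vᴴ) ≤ t⁻¹ * t := by
            exact mul_le_mul_of_nonneg_left hnV htinv
        _ = 1 := inv_mul_cancel₀ htpos.ne'
    have hbW : fnorm (W' * W'ᴴ) ≤ 1 := by
      rw [hWW', fnorm_smul htinv]
      calc t⁻¹ * fnorm (W * Wᴴ) ≤ t⁻¹ * t := by
            exact mul_le_mul_of_nonneg_left hnW htinv
        _ = 1 := inv_mul_cancel₀ htpos.ne'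
    have hfd : fnorm (V' * V'ᴴ - W' * W'ᴴ) = 1 := by
      rw [hdiff, fnorm_smul htinv, ← ht, inv_mul_cancel₀ htpos.ne']
    refine ⟨(V', W'), ⟨fun i k => entry_bound _ hbV i k,
      fun i j => entry_bound _ hbW i j, hfd⟩, ?_⟩
    show vnorm (measMap E X₁ - measMap E X₂)
      = t * vnorm (measMap E (V' * V'ᴴ - W' * W'ᴴ))
    rw [hdiff, measMap_smul, vnorm_smul htinv, ← measMap_sub, ← mul_assoc,
      mul_inv_cancel₀ htpos.ne', one_mul]
  rcases Set.eq_empty_or_nonempty K with hKe | hKne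
  · refine ⟨1, one_pos, ?_⟩
    intro X₁ X₂ h1 hrk h2
    by_cases hne : X₁ = X₂
    · subst hne
      rw [sub_self, sub_self, fnorm_zero, vnorm_zero, mul_zero]
    · obtain ⟨p, hpK, _⟩ := key X₁ X₂ h1 hrk h2 hne
      rw [hKe] at hpK
      exact absurd hpK (Set.notMem_empty p)
  · have hM : Continuous (fun p : Matrix (Fin d) (Fin r) ℂ × Matrix (Fin d) (Fin d) ℂ =>
        p.1 * p.1ᴴ - p.2 * p.2ᴴ) :=
      (continuous_fst.matrix_mul continuous_fst.matrix_conjTranspose).sub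
        (continuous_snd.matrix_mul continuous_snd.matrix_conjTranspose)
    have hcont : Continuous (fun p : Matrix (Fin d) (Fin r) ℂ × Matrix (Fin d) (Fin d) ℂ =>
        vnorm (measMap E (p.1 * p.1ᴴ - p.2 * p.2ᴴ))) :=
      vnorm_continuous.comp ((measMap_continuous E).comp hM)
    have hKclosed : IsClosed K := by
      have c1 : IsClosed {p : Matrix (Fin d) (Fin r) ℂ × Matrix (Fin d) (Fin d) ℂ |
          ∀ i k, ‖p.1 i k‖ ≤ 1} := by
        have : {p : Matrix (Fin d) (Fin r) ℂ × Matrix (Fin d) (Fin d) ℂ | ∀ i k, ‖p.1 i k‖ ≤ 1}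
            = ⋂ i, ⋂ k, {p | ‖p.1 i k‖ ≤ 1} := by ext p; simp
        rw [this]
        exact isClosed_iInter fun i => isClosed_iInter fun k =>
          isClosed_le (continuous_fst.matrix_elem i k).norm continuous_const
      have c2 : IsClosed {p : Matrix (Fin d) (Fin r) ℂ × Matrix (Fin d) (Fin d) ℂ |
          ∀ i j, ‖p.2 i j‖ ≤ 1} := by
        have : {p : Matrix (Fin d) (Fin r) ℂ × Matrix (Fin d) (Fin d) ℂ | ∀ i j, ‖p.2 i j‖ ≤ 1}
            = ⋂ i, ⋂ j, {p | ‖p.2 i j‖ ≤ 1} := by ext p; simp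
        rw [this]
        exact isClosed_iInter fun i => isClosed_iInter fun j =>
          isClosed_le (continuous_snd.matrix_elem i j).norm continuous_const
      have c3 : IsClosed {p : Matrix (Fin d) (Fin r) ℂ × Matrix (Fin d) (Fin d) ℂ |
          fnorm (p.1 * p.1ᴴ - p.2 * p.2ᴴ) = 1} :=
        isClosed_eq (fnorm_continuous.comp hM) continuous_const
      have : K = _ ∩ (_ ∩ _) := rfl
      exact c1.inter (c2.inter c3)
    have hsub : K ⊆ {A : Matrix (Fin d) (Fin r) ℂ | ∀ i k, ‖A i k‖ ≤ 1} ×ˢ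
        {B : Matrix (Fin d) (Fin d) ℂ | ∀ i j, ‖B i j‖ ≤ 1} := fun p hp => ⟨hp.1, hp.2.1⟩
    have hKcomp : IsCompact K :=
      (compact_ball.prod compact_ball).of_isClosed_subset hKclosed hsub
    obtain ⟨p₀, hp₀K, hmin⟩ := hKcomp.exists_isMinOn hKne hcont.continuousOn
    set α := vnorm (measMap E (p₀.1 * p₀.1ᴴ - p₀.2 * p₀.2ᴴ)) with hα
    have hαpos : 0 < α := by
      rcases (vnorm_nonneg (measMap E (p₀.1 * p₀.1ᴴ - p₀.2 * p₀.2ᴴ))).lt_or_eq with h | h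
      · exact h
      · exfalso
        have h0 : measMap E (p₀.1 * p₀.1ᴴ - p₀.2 * p₀.2ᴴ) = 0 := vnorm_eq_zero h.symm
        have hMM : measMap E (p₀.1 * p₀.1ᴴ) = measMap E (p₀.2 * p₀.2ᴴ) := by
          have hh := measMap_sub E (p₀.1 * p₀.1ᴴ) (p₀.2 * p₀.2ᴴ)
          rw [h0] at hh
          exact sub_eq_zero.mp hh.symm
        have hrank : (p₀.1 * p₀.1ᴴ).rank ≤ r := by
          refine le_trans (Matrix.rank_mul_le_left _ _) ?_
          simpa using Matrix.rank_le_card_width p₀.1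
        have heq := hsc _ _ (Matrix.posSemidef_self_mul_conjTranspose p₀.1) hrank
          (Matrix.posSemidef_self_mul_conjTranspose p₀.2) hMM
        have h1 : fnorm (p₀.1 * p₀.1ᴴ - p₀.2 * p₀.2ᴴ) = 1 := hp₀K.2.2
        rw [heq, sub_self, fnorm_zero] at h1
        exact zero_ne_one h1
    refine ⟨α, hαpos, ?_⟩
    intro X₁ X₂ h1 hrk h2
    by_cases hne : X₁ = X₂
    · subst hne
      rw [sub_self, sub_self, fnorm_zero, vnorm_zero, mul_zero]
    · obtain ⟨p, hpK, heq⟩ := key X₁ X₂ h1 hrk h2 hne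
      rw [heq]
      have hle : α ≤ vnorm (measMap E (p.1 * p.1ᴴ - p.2 * p.2ᴴ)) := hmin hpK
      calc α * fnorm (X₁ - X₂)
          ≤ vnorm (measMap E (p.1 * p.1ᴴ - p.2 * p.2ᴴ)) * fnorm (X₁ - X₂) :=
            mul_le_mul_of_nonneg_right hle (fnorm_nonneg _)
        _ = fnorm (X₁ - X₂) * vnorm (measMap E (p.1 * p.1ᴴ - p.2 * p.2ᴴ)) := mul_comm _ _
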